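/- arXiv:2306.05229 — 10 statements merged into one kernel-verified Lean document; each statement's English description precedes it below -/
import Mathlib

section
/- If p →τ q in an ILTS, then the set of traces producible by p equals the set of traces producible by q, i.e., T(p) = T(q), where T(p) = { t | ∃ p'. p ⇒t p' } and ⇒t abstracts over silent actions. -/
/-- An Instrumentable Labelled Transition System (ILTS): states `Prc`,
traceable actions `Act` (labels `some a`), silent action `τ` (label `none`),
an equivalence on states respected by transitions, silent transitions
confluent with all actions, and a determinacy predicate `det`. -/
structure ILTS (Prc Act : Type) where
  step : Prc → Option Act → Prc → Prop
  eqv : Prc → Prc → Prop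
  ext : Act → Prop
  det : Act → Bool
  eqv_equiv : Equivalence eqv
  eqv_resp : ∀ p q l p', eqv p q → step p l p' → ∃ q', step q l q' ∧ eqv p' q'
  tau_tau : ∀ p p' p'', step p none p' → step p none p'' → eqv p' p''
  tau_conf : ∀ p p' a p'', step p none p' → step p (some a) p'' →
      ∃ q, step p' (some a) q ∧ step p'' none q
  det_spec : ∀ a, det a = true →
      ∀ p p' p'', step p (some a) p' → step p (some a) p'' → eqv p' p''

/-- Weak traceable transitions `p ⇒t q`: abstract over silent actions only. -/
inductive ILTS.wt {Prc Act : Type} (S : ILTS Prc Act) : Prc → List Act → Prc → Prop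
  | refl : ∀ p, ILTS.wt S p [] p
  | tau : ∀ {p p' t q}, S.step p none p' → ILTS.wt S p' t q → ILTS.wt S p t q
  | act : ∀ {p a p' t q}, S.step p (some a) p' → ILTS.wt S p' t q → ILTS.wt S p (a :: t) q

/-- The set of traces producible by a state. -/
def ILTS.traces {Prc Act : Type} (S : ILTS Prc Act) (p : Prc) : Set (List Act) :=
  { t | ∃ q, S.wt p t q }

lemma ILTS.wt_eqv {Prc Act : Type} (S : ILTS Prc Act) :
    ∀ {p t r}, S.wt p t r → ∀ {q}, S.eqv p q → ∃ r', S.wt q t r' := by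
  intro p t r hw
  induction hw with
  | refl p => exact fun _ => ⟨_, ILTS.wt.refl _⟩
  | tau hs _ ih =>
    intro q he
    obtain ⟨q', hs', he'⟩ := S.eqv_resp _ _ _ _ he hs
    obtain ⟨r', hr'⟩ := ih he'
    exact ⟨r', ILTS.wt.tau hs' hr'⟩
  | act hs _ ih =>
    intro q he
    obtain ⟨q', hs', he'⟩ := S.eqv_resp _ _ _ _ he hs
    obtain ⟨r', hr'⟩ := ih he'
    exact ⟨r', ILTS.wt.act hs' hr'⟩

lemma ILTS.wt_tau {Prc Act : Type} (S : ILTS Prc Act) :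
    ∀ {p t r}, S.wt p t r → ∀ {q}, S.step p none q → ∃ r', S.wt q t r' := by
  intro p t r hw
  induction hw with
  | refl p => exact fun _ => ⟨_, ILTS.wt.refl _⟩
  | tau hs hw' ih =>
    intro q hq
    exact S.wt_eqv hw' (S.tau_tau _ _ _ hs hq)
  | act hs _ ih =>
    intro q hq
    obtain ⟨s, hqs, hps⟩ := S.tau_conf _ _ _ _ hq hs
    obtain ⟨r', hr'⟩ := ih hps
    exact ⟨r', ILTS.wt.act hqs hr'⟩

/-- If `p →τ q` in an ILTS, then `T(p) = T(q)`: the states before and after a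
silent transition produce exactly the same set of traces. -/
theorem traces_eq_of_silent_step {Prc Act : Type} (S : ILTS Prc Act)
    (p q : Prc) (h : S.step p none q) :
    S.traces p = S.traces q := by
  ext t
  constructor
  · rintro ⟨r, hr⟩
    exact S.wt_tau hr h
  · rintro ⟨r, hr⟩
    exact ⟨r, ILTS.wt.tau h hr⟩
end

section
/- If an action a is deterministic in an ILTS (Det(a) = true), and p ⇒a p' and p ⇒a p'' (weak traceable transitions abstracting over silent τ actions), then T(p') = T(p''): the two states reached produce the same trace sets. -/
namespace ILTSAux
variable {Prc Act : Type} (S : ILTS Prc Act)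

lemma eqv_wt : ∀ {p t r}, S.wt p t r → ∀ {q}, S.eqv p q →
    ∃ r', S.wt q t r' ∧ S.eqv r r' := by
  intro p t r h
  induction h with
  | refl p => exact fun hq => ⟨_, ILTS.wt.refl _, hq⟩
  | tau hs _ ih =>
      intro q hq
      obtain ⟨q1, hq1, he1⟩ := S.eqv_resp _ _ _ _ hq hs
      obtain ⟨r', hr', he'⟩ := ih he1
      exact ⟨r', ILTS.wt.tau hq1 hr', he'⟩
  | act hs _ ih =>
      intro q hq
      obtain ⟨q1, hq1, he1⟩ := S.eqv_resp _ _ _ _ hq hs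
      obtain ⟨r', hr', he'⟩ := ih he1
      exact ⟨r', ILTS.wt.act hq1 hr', he'⟩

lemma traces_eqv {p q : Prc} (h : S.eqv p q) : S.traces p = S.traces q := by
  ext t
  constructor
  · rintro ⟨r, hr⟩; obtain ⟨r', hr', -⟩ := eqv_wt S hr h; exact ⟨r', hr'⟩
  · rintro ⟨r, hr⟩
    obtain ⟨r', hr', -⟩ := eqv_wt S hr (S.eqv_equiv.symm h)
    exact ⟨r', hr'⟩

lemma tau_push : ∀ {p t r}, S.wt p t r → ∀ {p'}, S.step p none p' →
    ∃ r', S.wt p' t r' ∧ (S.eqv r r' ∨ S.step r none r') := by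
  intro p t r h
  induction h with
  | refl p => exact fun hs => ⟨_, ILTS.wt.refl _, Or.inr hs⟩
  | tau hs1 hw ih =>
      intro p' hs
      have he := S.tau_tau _ _ _ hs1 hs
      obtain ⟨r', hr', he'⟩ := eqv_wt S hw he
      exact ⟨r', hr', Or.inl he'⟩
  | act hs1 hw ih =>
      intro p' hs
      obtain ⟨q0, hq1, hq2⟩ := S.tau_conf _ _ _ _ hs hs1
      obtain ⟨r', hr', hd⟩ := ih hq2
      exact ⟨r', ILTS.wt.act hq1 hr', hd⟩

lemma tau_push_traces {p p' : Prc} (hs : S.step p none p') :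
    S.traces p ⊆ S.traces p' := by
  rintro t ⟨r, hr⟩
  obtain ⟨r', hr', -⟩ := tau_push S hr hs
  exact ⟨r', hr'⟩

lemma wt_nil_sub : ∀ {p q}, S.wt p [] q → S.traces p ⊆ S.traces q := by
  intro p q h
  generalize he : ([] : List Act) = l at h
  induction h with
  | refl p => exact le_refl _
  | tau hs _ ih => exact (tau_push_traces S hs).trans (ih he)
  | act hs hw ih => simp at he

lemma wt_nil_sup : ∀ {p q}, S.wt p [] q → S.traces q ⊆ S.traces p := by
  intro p q h
  generalize he : ([] : List Act) = l at h
  induction h with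
  | refl p => exact le_refl _
  | tau hs _ ih =>
      intro t ht
      obtain ⟨r, hr⟩ := ih he ht
      exact ⟨r, ILTS.wt.tau hs hr⟩
  | act hs hw ih => simp at he

lemma push_a {a : Act} (hdet : S.det a = true) :
    ∀ {p q}, S.wt p [a] q → ∀ {s1}, S.step p (some a) s1 →
      S.traces s1 ⊆ S.traces q := by
  intro p q h
  generalize he : [a] = l at h
  induction h with
  | refl p => simp at he
  | tau hs hw ih =>
      intro s1 hstep t ht
      obtain ⟨r, hr1, hr2⟩ := S.tau_conf _ _ _ _ hs hstep
      exact ih he hr1 (tau_push_traces S hr2 ht)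
  | act hs hw ih =>
      intro s1 hstep
      injection he with he1 he2
      subst he1; subst he2
      have he1 := S.det_spec a hdet _ _ _ hstep hs
      rw [traces_eqv S he1]
      exact wt_nil_sub S hw

lemma mem_traces {a : Act} (hdet : S.det a = true) :
    ∀ {p t s}, S.wt p (a :: t) s → ∀ {q}, S.wt p [a] q → t ∈ S.traces q := by
  intro p t s h
  generalize he : a :: t = l at h
  induction h with
  | refl p => simp at he
  | tau hs hw ih =>
      intro q hq
      obtain ⟨q', hq', hd⟩ := tau_push S hq hs
      have ht := ih he hq'
      rcases hd with hd | hd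
      · rwa [traces_eqv S hd]
      · obtain ⟨r, hr⟩ := ht
        exact ⟨r, ILTS.wt.tau hd hr⟩
  | act hs hw ih =>
      intro q hq
      injection he with he1 he2
      subst he1; subst he2
      exact push_a S hdet hq hs ⟨_, hw⟩

lemma wt_trans : ∀ {p t q t' r}, S.wt p t q → S.wt q t' r → S.wt p (t ++ t') r := by
  intro p t q t' r h
  induction h with
  | refl p => exact fun h' => by simpa using h'
  | tau hs _ ih => exact fun h' => ILTS.wt.tau hs (ih h')
  | act hs _ ih => exact fun h' => ILTS.wt.act hs (ih h')

end ILTSAux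

/-- If `a` is a deterministic action of the ILTS and `p ⇒a p'` and `p ⇒a p''`
are weak traceable transitions, then `T(p') = T(p'')`. -/
theorem traces_eq_of_det_weak {Prc Act : Type} (S : ILTS Prc Act)
    (a : Act) (hdet : S.det a = true)
    (p p' p'' : Prc) (h1 : S.wt p [a] p') (h2 : S.wt p [a] p'') :
    S.traces p' = S.traces p'' := by
  ext t
  constructor
  · intro ht
    obtain ⟨s, hs⟩ := ht
    have : S.wt p (a :: t) s := ILTSAux.wt_trans S h1 hs
    exact ILTSAux.mem_traces S hdet this h2
  · intro ht
    obtain ⟨s, hs⟩ := ht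
    have : S.wt p (a :: t) s := ILTSAux.wt_trans S h2 hs
    exact ILTSAux.mem_traces S hdet this h1
end

section
/- Monitor trace veracity: for any history H, monitor m, system state p, and any instrumented execution ⟨p, (ε, m), H⟩ →μ₁ ⋯ →μₙ ⟨p', (t, m'), H'⟩ of the instrumentation semantics, the recorded trace t is actually produced by the system: p ⇒t p' (weak traceable transition). -/
/-- Monitors: `no` (rejection), `yes` (inconclusive ✓), action prefix,
recursion (de Bruijn), variables, and parallel composition where
`par true` is conjunction `⊗` and `par false` is disjunction `⊕`. -/
inductive Mon (Act : Type) : Type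
  | no : Mon Act
  | yes : Mon Act
  | act : Act → Mon Act → Mon Act
  | mrec : Mon Act → Mon Act
  | var : Nat → Mon Act
  | par : Bool → Mon Act → Mon Act → Mon Act

/-- Substitute monitor `s` for variable `k` in a monitor. -/
def Mon.substV {Act : Type} : Mon Act → Nat → Mon Act → Mon Act
  | .no, _, _ => .no
  | .yes, _, _ => .yes
  | .act a m, k, s => .act a (m.substV k s)
  | .mrec m, k, s => .mrec (m.substV (k + 1) s)
  | .var n, k, s => if n = k then s else .var n
  | .par o m n, k, s => .par o (m.substV k s) (n.substV k s)

/-- A monitor can perform a τ move (independent of the trace and history). -/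
def canTau {Act : Type} : Mon Act → Prop
  | .mrec _ => True
  | .par _ m n => m = .no ∨ n = .no ∨ canTau m ∨ canTau n
  | _ => False

/-- A monitor can analyse the external action `a`. -/
def canAct {Act : Type} (a : Act) : Mon Act → Prop
  | .yes => True
  | .act b _ => b = a
  | .par _ m n =>
      (canAct a m ∧ canAct a n) ∨
      (n ≠ .no ∧ canAct a m ∧ ¬ canAct a n ∧ ¬ canTau n) ∨
      (m ≠ .no ∧ canAct a n ∧ ¬ canAct a m ∧ ¬ canTau m)
  | _ => False

/-- Executing-monitor transitions `(t, m) →μ_H (t', m')` relative to a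
history `H`; label `none` is τ, label `some a` an external action. -/
inductive MStep {Act : Type} (H : Set (List Act)) :
    List Act × Mon Act → Option Act → List Act × Mon Act → Prop
  | mEnd : ∀ (t : List Act) (a : Act), MStep H (t, .yes) (some a) (t ++ [a], .yes)
  | mAct : ∀ (t : List Act) (a : Act) (m : Mon Act),
      MStep H (t, .act a m) (some a) (t ++ [a], m)
  | mRec : ∀ (t : List Act) (m : Mon Act),
      MStep H (t, .mrec m) none (t, m.substV 0 (.mrec m))
  | mVrP1L : ∀ (t : List Act) (o : Bool) (m : Mon Act), t ∈ H →
      MStep H (t, .par o .no m) none (t, m)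
  | mVrP1R : ∀ (t : List Act) (o : Bool) (m : Mon Act), t ∈ H →
      MStep H (t, .par o m .no) none (t, m)
  | mVrP2L : ∀ (t : List Act) (o : Bool) (m : Mon Act), t ∉ H →
      MStep H (t, .par o .no m) none (t, .no)
  | mVrP2R : ∀ (t : List Act) (o : Bool) (m : Mon Act), t ∉ H →
      MStep H (t, .par o m .no) none (t, .no)
  | mTauL : ∀ {t : List Act} {m m' : Mon Act} (o : Bool) (n : Mon Act),
      MStep H (t, m) none (t, m') →
      MStep H (t, .par o m n) none (t, .par o m' n)
  | mTauR : ∀ {t : List Act} {n n' : Mon Act} (o : Bool) (m : Mon Act),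
      MStep H (t, n) none (t, n') →
      MStep H (t, .par o m n) none (t, .par o m n')
  | mPar1 : ∀ {t t' : List Act} {a : Act} {m m' n n' : Mon Act} (o : Bool),
      MStep H (t, m) (some a) (t', m') → MStep H (t, n) (some a) (t', n') →
      MStep H (t, .par o m n) (some a) (t', .par o m' n')
  | mPar2L : ∀ {t t' : List Act} {a : Act} {m m' : Mon Act} (o : Bool) (n : Mon Act),
      n ≠ .no → MStep H (t, m) (some a) (t', m') →
      ¬ canAct a n → ¬ canTau n →
      MStep H (t, .par o m n) (some a) (t', m')
  | mPar2R : ∀ {t t' : List Act} {a : Act} {n n' : Mon Act} (o : Bool) (m : Mon Act),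
      m ≠ .no → MStep H (t, n) (some a) (t', n') →
      ¬ canAct a m → ¬ canTau m →
      MStep H (t, .par o m n) (some a) (t', n')

/-- Weak traceable transitions `p ⇒t p'` of the system: abstract over silent
actions (`none`) only; `t` records all traceable (external and internal)
actions. -/
inductive SysWT {Prc Act : Type} (step : Prc → Option Act → Prc → Prop) :
    Prc → List Act → Prc → Prop
  | refl : ∀ p, SysWT step p [] p
  | tau : ∀ {p p' t q}, step p none p' → SysWT step p' t q → SysWT step p t q
  | act : ∀ {p a p' t q}, step p (some a) p' → SysWT step p' t q →
      SysWT step p (a :: t) q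

/-- Monitored-system configurations: a system state, an executing-monitor
(accumulated trace and monitor state), and a history. -/
abbrev Cfg (Prc Act : Type) := Prc × (List Act × Mon Act) × Set (List Act)

/-- The instrumentation semantics; `Ext` distinguishes external from internal
traceable actions, `none` labels silent moves. -/
inductive IStep {Prc Act : Type} (step : Prc → Option Act → Prc → Prop)
    (Ext : Act → Prop) : Cfg Prc Act → Option Act → Cfg Prc Act → Prop
  | iNo : ∀ (p : Prc) (t : List Act) (H : Set (List Act)),
      IStep step Ext (p, (t, .no), H) none (p, (t, .yes), insert t H)
  | iTer : ∀ {p p' : Prc} {a : Act} (t : List Act) (m : Mon Act)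
      (H : Set (List Act)), m ≠ Mon.no → step p (some a) p' → Ext a →
      ¬ canAct a m → ¬ canTau m →
      IStep step Ext (p, (t, m), H) (some a) (p', (t ++ [a], .yes), H)
  | iAsS : ∀ {p p' : Prc} (t : List Act) (m : Mon Act) (H : Set (List Act)),
      m ≠ Mon.no → step p none p' →
      IStep step Ext (p, (t, m), H) none (p', (t, m), H)
  | iAsI : ∀ {p p' : Prc} {i : Act} (t : List Act) (m : Mon Act)
      (H : Set (List Act)), m ≠ Mon.no → step p (some i) p' → ¬ Ext i →
      IStep step Ext (p, (t, m), H) none (p', (t ++ [i], m), H)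
  | iAsM : ∀ {t t' : List Act} {m m' : Mon Act} (p : Prc) (H : Set (List Act)),
      MStep H (t, m) none (t', m') →
      IStep step Ext (p, (t, m), H) none (p, (t', m'), H)
  | iMon : ∀ {p p' : Prc} {a : Act} {t t' : List Act} {m m' : Mon Act}
      (H : Set (List Act)), step p (some a) p' → Ext a →
      MStep H (t, m) (some a) (t', m') →
      IStep step Ext (p, (t, m), H) (some a) (p', (t', m'), H)

lemma mstep_trace {Act : Type} {H : Set (List Act)} {c c' : List Act × Mon Act}
    {μ : Option Act} (h : MStep H c μ c') : c'.1 = c.1 ++ μ.toList := by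
  induction h <;> simp_all

lemma trace_veracity_aux {Prc Act : Type} (step : Prc → Option Act → Prc → Prop)
    (Ext : Act → Prop) (H' : Set (List Act)) (m' : Mon Act)
    (p' : Prc) (t' : List Act) :
    ∀ c : Cfg Prc Act,
    Relation.ReflTransGen (fun c c' => ∃ μ, IStep step Ext c μ c')
      c (p', (t', m'), H') →
    ∃ s, t' = c.2.1.1 ++ s ∧ SysWT step c.1 s p' := by
  intro c h
  induction h using Relation.ReflTransGen.head_induction_on with
  | refl => exact ⟨[], by simp, SysWT.refl p'⟩
  | head hstep _ ih =>
    obtain ⟨μ, hstep⟩ := hstep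
    cases hstep with
    | iNo p t H =>
        obtain ⟨s, hs, hw⟩ := ih
        exact ⟨s, hs, hw⟩
    | iTer t m H hno hst hext hca hct =>
        obtain ⟨s, hs, hw⟩ := ih
        refine ⟨_ :: s, ?_, SysWT.act hst hw⟩
        simpa using hs
    | iAsS t m H hno hst =>
        obtain ⟨s, hs, hw⟩ := ih
        exact ⟨s, hs, SysWT.tau hst hw⟩
    | iAsI t m H hno hst hext =>
        obtain ⟨s, hs, hw⟩ := ih
        refine ⟨_ :: s, ?_, SysWT.act hst hw⟩
        simpa using hs
    | iAsM p H hm =>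
        obtain ⟨s, hs, hw⟩ := ih
        have := mstep_trace hm
        simp at this
        exact ⟨s, by simpa [this] using hs, hw⟩
    | iMon H hst hext hm =>
        obtain ⟨s, hs, hw⟩ := ih
        have := mstep_trace hm
        simp at this
        refine ⟨_ :: s, ?_, SysWT.act hst hw⟩
        simp [this] at hs
        simpa using hs

/-- Monitor trace veracity: any instrumented execution starting from the empty
trace only records traces actually produced by the system: `p ⇒t p'`. -/
theorem trace_veracity {Prc Act : Type} (step : Prc → Option Act → Prc → Prop)
    (Ext : Act → Prop) (H H' : Set (List Act)) (m m' : Mon Act)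
    (p p' : Prc) (t : List Act)
    (h : Relation.ReflTransGen (fun c c' => ∃ μ, IStep step Ext c μ c')
      (p, ([], m), H) (p', (t, m'), H')) :
    SysWT step p t p' := by
  obtain ⟨s, hs, hw⟩ := trace_veracity_aux step Ext H' m' p' t (p, ([], m), H) h
  simpa [hs] using hw
end

section
/- τ-race absence for monitors: if an executing-monitor (t, m) can perform a τ transition (t, m) →τ_H (t, m'), then it cannot perform any external-action transition: (t, m) ↛a_H for all external actions a. -/
lemma step_canTau {Act : Type} {H : Set (List Act)} {p q : List Act × Mon Act}
    {μ : Option Act} (h : MStep H p μ q) : μ = none → canTau p.2 := by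
  induction h with
  | mRec => intro _; trivial
  | mVrP1L => intro _; left; rfl
  | mVrP1R => intro _; right; left; rfl
  | mVrP2L => intro _; left; rfl
  | mVrP2R => intro _; right; left; rfl
  | mTauL o n _ ih => intro _; right; right; left; exact ih rfl
  | mTauR o m _ ih => intro _; right; right; right; exact ih rfl
  | _ => intro h; cases h

lemma step_canAct {Act : Type} {H : Set (List Act)} {p q : List Act × Mon Act}
    {μ : Option Act} (h : MStep H p μ q) : ∀ a, μ = some a → canAct a p.2 := by
  induction h with
  | mEnd => intro a ha; trivial
  | mAct t b m => intro a ha; cases ha; rfl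
  | mPar1 o _ _ ih1 ih2 => intro a ha; cases ha; exact Or.inl ⟨ih1 _ rfl, ih2 _ rfl⟩
  | mPar2L o n hn _ hca hct ih =>
      intro a ha; cases ha; exact Or.inr (Or.inl ⟨hn, ih _ rfl, hca, hct⟩)
  | mPar2R o m hm _ hca hct ih =>
      intro a ha; cases ha; exact Or.inr (Or.inr ⟨hm, ih _ rfl, hca, hct⟩)
  | _ => intro a ha; cases ha

lemma canAct_not_canTau {Act : Type} (a : Act) :
    ∀ m : Mon Act, canAct a m → ¬ canTau m := by
  intro m
  induction m with
  | no => intro h; exact h.elim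
  | yes => intro _ h; exact h
  | act b m ih => intro _ h; exact h
  | mrec m ih => intro h; exact h.elim
  | var n => intro h; exact h.elim
  | par o m n ihm ihn =>
      intro hca hct
      have hmno : canAct a m → m ≠ Mon.no := by rintro h rfl; exact h
      have hnno : canAct a n → n ≠ Mon.no := by rintro h rfl; exact h
      rcases hca with ⟨h1, h2⟩ | ⟨hn, h1, _, hctn⟩ | ⟨hm, h1, _, hctm⟩ <;>
        rcases hct with h | h | h | h
      · exact hmno h1 h
      · exact hnno h2 h
      · exact ihm h1 h
      · exact ihn h2 h
      · exact hmno h1 h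
      · exact hn h
      · exact ihm h1 h
      · exact hctn h
      · exact hm h
      · exact hnno h1 h
      · exact hctm h
      · exact ihn h1 h

/-- τ-race absence: an executing-monitor that can perform a τ transition cannot
perform any external-action transition. -/
theorem tau_race_absence {Act : Type} (H : Set (List Act))
    (t : List Act) (m : Mon Act) (s : List Act × Mon Act)
    (h : MStep H (t, m) none s) :
    ∀ (a : Act) (s' : List Act × Mon Act), ¬ MStep H (t, m) (some a) s' := by
  intro a s' h'
  exact canAct_not_canTau a m (step_canAct h' a rfl) (step_canTau h rfl)
end

section
/- Monitor τ-confluence: if (t, m) →τ_H (t, m') and (t, m) →τ_H (t, m''), then there exists a monitor n and sequences of τ moves (t, m') (→τ_H)* (t, n) and (t, m'') (→τ_H)* (t, n). -/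
private lemma mstep_tau_fst {Act : Type} {H : Set (List Act)} :
    ∀ {s p : List Act × Mon Act}, MStep H s none p → p.1 = s.1 := by
  intro s p h
  cases h <;> rfl

private lemma liftL {Act : Type} {H : Set (List Act)} (o : Bool) (b : Mon Act)
    {t : List Act} {x : Mon Act} {p : List Act × Mon Act}
    (h : Relation.ReflTransGen (fun s s' => MStep H s none s') (t, x) p) :
    p.1 = t ∧ Relation.ReflTransGen (fun s s' => MStep H s none s')
      (t, Mon.par o x b) (t, Mon.par o p.2 b) := by
  induction h with
  | refl => exact ⟨rfl, .refl⟩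
  | @tail c q hpath hstep ih =>
    obtain ⟨c1, c2⟩ := c
    obtain ⟨q1, q2⟩ := q
    obtain ⟨hc, hlift⟩ := ih
    have hc' : c1 = t := hc
    have hq : q1 = c1 := mstep_tau_fst hstep
    subst hq
    subst hc'
    exact ⟨rfl, hlift.tail (MStep.mTauL o b hstep)⟩

private lemma liftR {Act : Type} {H : Set (List Act)} (o : Bool) (a : Mon Act)
    {t : List Act} {x : Mon Act} {p : List Act × Mon Act}
    (h : Relation.ReflTransGen (fun s s' => MStep H s none s') (t, x) p) :
    p.1 = t ∧ Relation.ReflTransGen (fun s s' => MStep H s none s')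
      (t, Mon.par o a x) (t, Mon.par o a p.2) := by
  induction h with
  | refl => exact ⟨rfl, .refl⟩
  | @tail c q hpath hstep ih =>
    obtain ⟨c1, c2⟩ := c
    obtain ⟨q1, q2⟩ := q
    obtain ⟨hc, hlift⟩ := ih
    have hc' : c1 = t := hc
    have hq : q1 = c1 := mstep_tau_fst hstep
    subst hq
    subst hc'
    exact ⟨rfl, hlift.tail (MStep.mTauR o a hstep)⟩

/-- Monitor τ-confluence: two τ derivatives of the same executing-monitor can be
joined by sequences of τ moves to a common monitor state. -/
theorem monitor_tau_confluence {Act : Type} (H : Set (List Act))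
    (t : List Act) (m m' m'' : Mon Act)
    (h1 : MStep H (t, m) none (t, m'))
    (h2 : MStep H (t, m) none (t, m'')) :
    ∃ n : Mon Act,
      Relation.ReflTransGen (fun s s' => MStep H s none s') (t, m') (t, n) ∧
      Relation.ReflTransGen (fun s s' => MStep H s none s') (t, m'') (t, n) := by
  revert m' m''
  induction m with
  | no => intro m' m'' h1 h2; cases h1
  | yes => intro m' m'' h1 h2; cases h1
  | act a k => intro m' m'' h1 h2; cases h1
  | mrec k => intro m' m'' h1 h2; cases h1; cases h2; exact ⟨_, .refl, .refl⟩
  | var n => intro m' m'' h1 h2; cases h1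
  | par o a b iha ihb =>
    intro m' m'' h1 h2
    cases h1 with
    | mVrP1L _ _ _ hH =>
      cases h2 with
      | mVrP1L _ _ _ _ => exact ⟨_, .refl, .refl⟩
      | mVrP1R _ _ _ _ => exact ⟨.no, .refl, .refl⟩
      | mVrP2L _ _ _ hH' => exact absurd hH hH'
      | mVrP2R _ _ _ hH' => exact absurd hH hH'
      | mTauL _ _ h => cases h
      | mTauR _ _ hb => exact ⟨_, .single hb, .single (MStep.mVrP1L _ _ _ hH)⟩
    | mVrP1R _ _ _ hH =>
      cases h2 with
      | mVrP1L _ _ _ _ => exact ⟨.no, .refl, .refl⟩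
      | mVrP1R _ _ _ _ => exact ⟨_, .refl, .refl⟩
      | mVrP2L _ _ _ hH' => exact absurd hH hH'
      | mVrP2R _ _ _ hH' => exact absurd hH hH'
      | mTauL _ _ ha => exact ⟨_, .single ha, .single (MStep.mVrP1R _ _ _ hH)⟩
      | mTauR _ _ h => cases h
    | mVrP2L _ _ _ hH =>
      cases h2 with
      | mVrP1L _ _ _ hH' => exact absurd hH' hH
      | mVrP1R _ _ _ hH' => exact absurd hH' hH
      | mVrP2L _ _ _ _ => exact ⟨.no, .refl, .refl⟩
      | mVrP2R _ _ _ _ => exact ⟨.no, .refl, .refl⟩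
      | mTauL _ _ h => cases h
      | mTauR _ _ hb => exact ⟨.no, .refl, .single (MStep.mVrP2L _ _ _ hH)⟩
    | mVrP2R _ _ _ hH =>
      cases h2 with
      | mVrP1L _ _ _ hH' => exact absurd hH' hH
      | mVrP1R _ _ _ hH' => exact absurd hH' hH
      | mVrP2L _ _ _ _ => exact ⟨.no, .refl, .refl⟩
      | mVrP2R _ _ _ _ => exact ⟨.no, .refl, .refl⟩
      | mTauL _ _ ha => exact ⟨.no, .refl, .single (MStep.mVrP2R _ _ _ hH)⟩
      | mTauR _ _ h => cases h
    | mTauL _ _ ha =>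
      cases h2 with
      | mVrP1L _ _ _ hH => cases ha
      | mVrP1R _ _ _ hH => exact ⟨_, .single (MStep.mVrP1R _ _ _ hH), .single ha⟩
      | mVrP2L _ _ _ hH => cases ha
      | mVrP2R _ _ _ hH => exact ⟨.no, .single (MStep.mVrP2R _ _ _ hH), .refl⟩
      | mTauL _ _ ha2 =>
        obtain ⟨n0, j1, j2⟩ := iha _ _ ha ha2
        exact ⟨_, (liftL o b j1).2, (liftL o b j2).2⟩
      | mTauR _ _ hb =>
        exact ⟨_, .single (MStep.mTauR o _ hb), .single (MStep.mTauL o _ ha)⟩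
    | mTauR _ _ hb =>
      cases h2 with
      | mVrP1L _ _ _ hH => exact ⟨_, .single (MStep.mVrP1L _ _ _ hH), .single hb⟩
      | mVrP1R _ _ _ hH => cases hb
      | mVrP2L _ _ _ hH => exact ⟨.no, .single (MStep.mVrP2L _ _ _ hH), .refl⟩
      | mVrP2R _ _ _ hH => cases hb
      | mTauL _ _ ha =>
        exact ⟨_, .single (MStep.mTauL o _ ha), .single (MStep.mTauR o _ hb)⟩
      | mTauR _ _ hb2 =>
        obtain ⟨n0, j1, j2⟩ := ihb _ _ hb hb2
        exact ⟨_, (liftR o a j1).2, (liftR o a j2).2⟩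
end

section
/- Monitor determinism: if (t, m) ⇒u_H (t', m') and (t, m) ⇒u_H (t'', m'') are two weak transition sequences of the same executing-monitor over the same action sequence u, then t' = t'' and the resulting monitors converge: there exists n with (t', m') (→τ_H)* (t', n) and (t'', m'') (→τ_H)* (t'', n). -/
/-- Weak monitor transitions `(t, m) ⇒u_H (t', m')`: interleavings of τ moves
and external-action moves spelling out the action sequence `u`. -/
inductive MWeak {Act : Type} (H : Set (List Act)) :
    List Act × Mon Act → List Act → List Act × Mon Act → Prop
  | refl : ∀ s, MWeak H s [] s
  | tau : ∀ {s s' u s''}, MStep H s none s' → MWeak H s' u s'' → MWeak H s u s''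
  | act : ∀ {s s' u s''} {a : Act}, MStep H s (some a) s' → MWeak H s' u s'' →
      MWeak H s (a :: u) s''

namespace MonKit

open Relation

variable {Act : Type} {H : Set (List Act)}

abbrev Tau (H : Set (List Act)) : (List Act × Mon Act) → (List Act × Mon Act) → Prop :=
  fun s s' => MStep H s none s'

lemma no_step {t : List Act} {μ : Option Act} {s' : List Act × Mon Act}
    (h : MStep H (t, Mon.no) μ s') : False := by cases h

lemma tau_trace {s s' : List Act × Mon Act} (h : MStep H s none s') : s'.1 = s.1 := by
  cases h <;> rfl

lemma act_trace' : ∀ (m : Mon Act) {t : List Act} {a : Act} {s' : List Act × Mon Act},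
    MStep H (t, m) (some a) s' → s'.1 = t ++ [a] := by
  intro m
  induction m with
  | no => intro t a s' h; cases h
  | yes => intro t a s' h; cases h; rfl
  | act b m _ => intro t a s' h; cases h; rfl
  | var k => intro t a s' h; cases h
  | mrec m _ => intro t a s' h; cases h
  | par o m n ihm ihn =>
    intro t a s' h
    cases h with
    | mPar1 o hm hn => simpa using ihm hm
    | mPar2L o n hne hm hca hct => simpa using ihm hm
    | mPar2R o m hne hn hca hct => simpa using ihn hn

lemma act_trace {s s' : List Act × Mon Act} {a : Act} (h : MStep H s (some a) s') :
    s'.1 = s.1 ++ [a] := by obtain ⟨t, m⟩ := s; exact act_trace' _ h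

lemma tau_canTau' : ∀ (m : Mon Act) {t : List Act} {s' : List Act × Mon Act},
    MStep H (t, m) none s' → canTau m := by
  intro m
  induction m with
  | no => intro t s' h; cases h
  | yes => intro t s' h; cases h
  | act a m _ => intro t s' h; cases h
  | var k => intro t s' h; cases h
  | mrec m _ => intro t s' h; trivial
  | par o m n ihm ihn =>
    intro t s' h
    cases h with
    | mVrP1L => exact Or.inl rfl
    | mVrP1R => exact Or.inr (Or.inl rfl)
    | mVrP2L => exact Or.inl rfl
    | mVrP2R => exact Or.inr (Or.inl rfl)
    | mTauL o n h => exact Or.inr (Or.inr (Or.inl (ihm h)))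
    | mTauR o m h => exact Or.inr (Or.inr (Or.inr (ihn h)))

lemma tau_canTau {s s' : List Act × Mon Act} (h : MStep H s none s') : canTau s.2 := by
  obtain ⟨t, m⟩ := s; exact tau_canTau' m h

lemma act_canAct' : ∀ (m : Mon Act) {t : List Act} {a : Act} {s' : List Act × Mon Act},
    MStep H (t, m) (some a) s' → canAct a m := by
  intro m
  induction m with
  | no => intro t a s' h; cases h
  | yes => intro t a s' h; trivial
  | act b m _ => intro t a s' h; cases h; rfl
  | var k => intro t a s' h; cases h
  | mrec m _ => intro t a s' h; cases h
  | par o m n ihm ihn =>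
    intro t a s' h
    cases h with
    | mPar1 o hm hn => exact Or.inl ⟨ihm hm, ihn hn⟩
    | mPar2L o n hne hm hca hct => exact Or.inr (Or.inl ⟨hne, ihm hm, hca, hct⟩)
    | mPar2R o m hne hn hca hct => exact Or.inr (Or.inr ⟨hne, ihn hn, hca, hct⟩)

lemma act_not_canTau' : ∀ (m : Mon Act) {t : List Act} {a : Act} {s' : List Act × Mon Act},
    MStep H (t, m) (some a) s' → ¬ canTau m := by
  intro m
  induction m with
  | no => intro t a s' h; cases h
  | yes => intro t a s' h hc; exact hc
  | act b m _ => intro t a s' h hc; exact hc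
  | var k => intro t a s' h; cases h
  | mrec m _ => intro t a s' h; cases h
  | par o m n ihm ihn =>
    intro t a s' h
    cases h with
    | mPar1 o hm hn =>
      rintro (rfl | rfl | hc | hc)
      · exact no_step hm
      · exact no_step hn
      · exact ihm hm hc
      · exact ihn hn hc
    | mPar2L o n hne hm hca hct =>
      rintro (rfl | rfl | hc | hc)
      · exact no_step hm
      · exact hne rfl
      · exact ihm hm hc
      · exact hct hc
    | mPar2R o m hne hn hca hct =>
      rintro (rfl | rfl | hc | hc)
      · exact hne rfl
      · exact no_step hn
      · exact hct hc
      · exact ihn hn hc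

lemma act_not_canTau {s s' : List Act × Mon Act} {a : Act}
    (h : MStep H s (some a) s') : ¬ canTau s.2 := by
  obtain ⟨t, m⟩ := s; exact act_not_canTau' m h

lemma act_det' : ∀ (m : Mon Act) {t : List Act} {a : Act} {s1 s2 : List Act × Mon Act},
    MStep H (t, m) (some a) s1 → MStep H (t, m) (some a) s2 → s1 = s2 := by
  intro m
  induction m with
  | no => intro t a s1 s2 h1 _; cases h1
  | yes => intro t a s1 s2 h1 h2; cases h1; cases h2; rfl
  | act b m _ => intro t a s1 s2 h1 h2; cases h1; cases h2; rfl
  | var k => intro t a s1 s2 h1 _; cases h1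
  | mrec m _ => intro t a s1 s2 h1 _; cases h1
  | par o m n ihm ihn =>
    intro t a s1 s2 h1 h2
    cases h1 with
    | mPar1 o hm1 hn1 =>
      cases h2 with
      | mPar1 o hm2 hn2 =>
        cases ihm hm1 hm2; cases ihn hn1 hn2; rfl
      | mPar2L o n hne hm2 hca hct => exact absurd (act_canAct' _ hn1) hca
      | mPar2R o m hne hn2 hca hct => exact absurd (act_canAct' _ hm1) hca
    | mPar2L o n hne hm1 hca hct =>
      cases h2 with
      | mPar1 o hm2 hn2 => exact absurd (act_canAct' _ hn2) hca
      | mPar2L o n hne2 hm2 hca2 hct2 => exact ihm hm1 hm2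
      | mPar2R o m hne2 hn2 hca2 hct2 => exact absurd (act_canAct' _ hm1) hca2
    | mPar2R o m hne hn1 hca hct =>
      cases h2 with
      | mPar1 o hm2 hn2 => exact absurd (act_canAct' _ hm2) hca
      | mPar2L o n hne2 hm2 hca2 hct2 => exact absurd (act_canAct' _ hm2) hca
      | mPar2R o m hne2 hn2 hca2 hct2 => exact ihn hn1 hn2

lemma reflGen_trace {s s' : List Act × Mon Act} (h : ReflGen (Tau H) s s') : s'.1 = s.1 := by
  cases h with
  | refl => rfl
  | single h => exact tau_trace h

lemma lift_left {t : List Act} {x y n : Mon Act} {o : Bool}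
    (h : ReflGen (Tau H) (t, x) (t, y)) :
    ReflGen (Tau H) (t, .par o x n) (t, .par o y n) := by
  cases h with
  | refl => exact .refl
  | single h => exact .single (MStep.mTauL o n h)

lemma lift_right {t : List Act} {x y m : Mon Act} {o : Bool}
    (h : ReflGen (Tau H) (t, x) (t, y)) :
    ReflGen (Tau H) (t, .par o m x) (t, .par o m y) := by
  cases h with
  | refl => exact .refl
  | single h => exact .single (MStep.mTauR o m h)

lemma tau_diamond : ∀ (m : Mon Act) {t : List Act} {s1 s2 : List Act × Mon Act},
    MStep H (t, m) none s1 → MStep H (t, m) none s2 →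
    ∃ d, ReflGen (Tau H) s1 d ∧ ReflGen (Tau H) s2 d := by
  intro m
  induction m with
  | no => intro t s1 s2 h1 _; cases h1
  | yes => intro t s1 s2 h1 _; cases h1
  | act a m _ => intro t s1 s2 h1 _; cases h1
  | var k => intro t s1 s2 h1 _; cases h1
  | mrec m _ =>
    intro t s1 s2 h1 h2
    cases h1; cases h2; exact ⟨_, .refl, .refl⟩
  | par o m n ihm ihn =>
    intro t s1 s2 h1 h2
    cases h1 with
    | mVrP1L _ _ _ hH =>
      cases h2 with
      | mVrP1L _ _ _ hH2 => exact ⟨_, .refl, .refl⟩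
      | mVrP1R _ _ _ hH2 => exact ⟨_, .refl, .refl⟩
      | mVrP2L _ _ _ hH2 => exact absurd hH hH2
      | mVrP2R _ _ _ hH2 => exact absurd hH hH2
      | mTauL o n h => exact absurd h no_step
      | mTauR o m h => exact ⟨_, .single h, .single (MStep.mVrP1L _ _ _ hH)⟩
    | mVrP1R _ _ _ hH =>
      cases h2 with
      | mVrP1L _ _ _ hH2 => exact ⟨_, .refl, .refl⟩
      | mVrP1R _ _ _ hH2 => exact ⟨_, .refl, .refl⟩
      | mVrP2L _ _ _ hH2 => exact absurd hH hH2
      | mVrP2R _ _ _ hH2 => exact absurd hH hH2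
      | mTauL o n h => exact ⟨_, .single h, .single (MStep.mVrP1R _ _ _ hH)⟩
      | mTauR o m h => exact absurd h no_step
    | mVrP2L _ _ _ hH =>
      cases h2 with
      | mVrP1L _ _ _ hH2 => exact absurd hH2 hH
      | mVrP1R _ _ _ hH2 => exact absurd hH2 hH
      | mVrP2L _ _ _ hH2 => exact ⟨_, .refl, .refl⟩
      | mVrP2R _ _ _ hH2 => exact ⟨_, .refl, .refl⟩
      | mTauL o n h => exact absurd h no_step
      | mTauR o m h => exact ⟨_, .refl, .single (MStep.mVrP2L _ _ _ hH)⟩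
    | mVrP2R _ _ _ hH =>
      cases h2 with
      | mVrP1L _ _ _ hH2 => exact absurd hH2 hH
      | mVrP1R _ _ _ hH2 => exact absurd hH2 hH
      | mVrP2L _ _ _ hH2 => exact ⟨_, .refl, .refl⟩
      | mVrP2R _ _ _ hH2 => exact ⟨_, .refl, .refl⟩
      | mTauL o n h => exact ⟨_, .refl, .single (MStep.mVrP2R _ _ _ hH)⟩
      | mTauR o m h => exact absurd h no_step
    | mTauL o n hm1 =>
      cases h2 with
      | mVrP1L _ _ _ hH2 => exact absurd hm1 no_step
      | mVrP1R _ _ _ hH2 => exact ⟨_, .single (MStep.mVrP1R _ _ _ hH2), .single hm1⟩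
      | mVrP2L _ _ _ hH2 => exact absurd hm1 no_step
      | mVrP2R _ _ _ hH2 => exact ⟨_, .single (MStep.mVrP2R _ _ _ hH2), .refl⟩
      | mTauL o n hm2 =>
        obtain ⟨d, r1, r2⟩ := ihm hm1 hm2
        have hd : d.1 = t := by
          have := reflGen_trace r1; simpa using this
        obtain ⟨dt, dm⟩ := d
        cases hd
        exact ⟨_, lift_left r1, lift_left r2⟩
      | mTauR o m hn2 =>
        exact ⟨_, .single (MStep.mTauR o _ hn2), .single (MStep.mTauL o _ hm1)⟩
    | mTauR o m hn1 =>
      cases h2 with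
      | mVrP1L _ _ _ hH2 => exact ⟨_, .single (MStep.mVrP1L _ _ _ hH2), .single hn1⟩
      | mVrP1R _ _ _ hH2 => exact absurd hn1 no_step
      | mVrP2L _ _ _ hH2 => exact ⟨_, .single (MStep.mVrP2L _ _ _ hH2), .refl⟩
      | mVrP2R _ _ _ hH2 => exact absurd hn1 no_step
      | mTauL o n hm2 =>
        exact ⟨_, .single (MStep.mTauL o _ hm2), .single (MStep.mTauR o _ hn1)⟩
      | mTauR o m hn2 =>
        obtain ⟨d, r1, r2⟩ := ihn hn1 hn2
        have hd : d.1 = t := by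
          have := reflGen_trace r1; simpa using this
        obtain ⟨dt, dm⟩ := d
        cases hd
        exact ⟨_, lift_right r1, lift_right r2⟩

lemma tau_confluent {s s1 s2 : List Act × Mon Act}
    (h1 : ReflTransGen (Tau H) s s1) (h2 : ReflTransGen (Tau H) s s2) :
    ∃ d, ReflTransGen (Tau H) s1 d ∧ ReflTransGen (Tau H) s2 d := by
  have := Relation.church_rosser (r := Tau H) ?_ h1 h2
  · exact this
  · rintro ⟨t, m⟩ b c hab hac
    obtain ⟨d, r1, r2⟩ := tau_diamond m hab hac
    exact ⟨d, r1, r2.to_reflTransGen⟩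

lemma tau_star_trace {s s' : List Act × Mon Act}
    (h : ReflTransGen (Tau H) s s') : s'.1 = s.1 := by
  induction h with
  | refl => rfl
  | tail _ hstep ih => exact (tau_trace hstep).trans ih

lemma tau_star_eq {s s' : List Act × Mon Act} (hnc : ¬ canTau s.2)
    (h : ReflTransGen (Tau H) s s') : s' = s := by
  rcases h.cases_head with h | ⟨c, hc, _⟩
  · exact h.symm
  · exact absurd (tau_canTau hc) hnc

lemma weak_nil : ∀ {s u s'}, MWeak H s u s' → u = [] → ReflTransGen (Tau H) s s' := by
  intro s u s' h
  induction h with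
  | refl => intro; exact .refl
  | tau hs _ ih => intro hu; exact .head hs (ih hu)
  | act hs _ _ => intro hu; exact absurd hu (by simp)

lemma weak_cons : ∀ {s u0 s''}, MWeak H s u0 s'' → ∀ {a : Act} {u}, u0 = a :: u →
    ∃ s1 s2, ReflTransGen (Tau H) s s1 ∧ MStep H s1 (some a) s2 ∧ MWeak H s2 u s'' := by
  intro s u0 s'' h
  induction h with
  | refl => intro a u hu; exact absurd hu (by simp)
  | tau hs _ ih =>
    intro a u hu
    obtain ⟨s1, s2, hst, hact, hrest⟩ := ih hu
    exact ⟨s1, s2, .head hs hst, hact, hrest⟩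
  | act hs hrest _ =>
    intro a u hu
    obtain ⟨rfl, rfl⟩ : _ ∧ _ := by injection hu with h1 h2; exact ⟨h1.symm, h2.symm⟩
    exact ⟨_, _, .refl, hs, hrest⟩

end MonKit

/-- Monitor determinism: two weak transition sequences of the same
executing-monitor over the same action sequence `u` accumulate the same trace
and reach τ-convergent monitor states. -/
theorem monitor_determinism {Act : Type} (H : Set (List Act))
    (t t' t'' u : List Act) (m m' m'' : Mon Act)
    (h1 : MWeak H (t, m) u (t', m'))
    (h2 : MWeak H (t, m) u (t'', m'')) :
    t' = t'' ∧ ∃ n : Mon Act,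
      Relation.ReflTransGen (fun s s' => MStep H s none s') (t', m') (t', n) ∧
      Relation.ReflTransGen (fun s s' => MStep H s none s') (t'', m'') (t'', n) := by
  induction u generalizing t m t' t'' m' m'' with
  | nil =>
    have w1 := MonKit.weak_nil h1 rfl
    have w2 := MonKit.weak_nil h2 rfl
    have ht1 : t' = t := MonKit.tau_star_trace w1
    have ht2 : t'' = t := MonKit.tau_star_trace w2
    obtain ⟨d, r1, r2⟩ := MonKit.tau_confluent w1 w2
    obtain ⟨dt, dm⟩ := d
    have hd1 : dt = t' := MonKit.tau_star_trace r1
    have hd2 : dt = t'' := MonKit.tau_star_trace r2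
    subst hd1
    exact ⟨ht1.trans ht2.symm, dm, r1, hd2 ▸ r2⟩
  | cons a u ih =>
    obtain ⟨s1, s2, hst1, hact1, hrest1⟩ := MonKit.weak_cons h1 rfl
    obtain ⟨s1', s2', hst2, hact2, hrest2⟩ := MonKit.weak_cons h2 rfl
    obtain ⟨d, r1, r2⟩ := MonKit.tau_confluent hst1 hst2
    have e1 : d = s1 := MonKit.tau_star_eq (MonKit.act_not_canTau hact1) r1
    have e2 : d = s1' := MonKit.tau_star_eq (MonKit.act_not_canTau hact2) r2
    subst e1
    rw [e2] at hact1
    obtain ⟨t1, m1⟩ := s1'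
    have e3 : s2 = s2' := MonKit.act_det' m1 hact1 hact2
    subst e3
    obtain ⟨t2, m2⟩ := s2
    exact ih t2 t' t'' m2 m' m'' hrest1 hrest2
end

section
/- Length irrevocability of history rejection: if a monitor m rejects a history containing trace t, i.e., reject(H ∪ {t}, b, m), then it also rejects the history where t is extended by any suffix u: reject(H ∪ {t·u}, b, m). -/
/-- `aft H a`: the continuations of the traces in `H` that start with `a`. -/
def aft {Act : Type} (H : Set (List Act)) (a : Act) : Set (List Act) :=
  { t | a :: t ∈ H }

/-- The history rejection judgement `reject(H, b, m)` with determinacy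
predicate `Det` and externality predicate `Ext` on actions. -/
inductive Reject {Act : Type} (Det : Act → Bool) (Ext : Act → Prop) :
    Set (List Act) → Bool → Mon Act → Prop
  | no : ∀ {H : Set (List Act)} {b : Bool}, H ≠ ∅ → Reject Det Ext H b .no
  | act : ∀ {H : Set (List Act)} {b : Bool} {a : Act} {m : Mon Act},
      Reject Det Ext (aft H a) (b && Det a) m → Reject Det Ext H b (.act a m)
  | actI : ∀ {H : Set (List Act)} {b : Bool} {a i : Act} {m : Mon Act},
      ¬ Ext i → Reject Det Ext (aft H i) (b && Det i) (.act a m) →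
      Reject Det Ext H b (.act a m)
  | parAL : ∀ {H : Set (List Act)} {b : Bool} {m n : Mon Act},
      Reject Det Ext H b m → Reject Det Ext H b (.par true m n)
  | parAR : ∀ {H : Set (List Act)} {b : Bool} {m n : Mon Act},
      Reject Det Ext H b n → Reject Det Ext H b (.par true m n)
  | parO : ∀ {H : Set (List Act)} {m n : Mon Act},
      Reject Det Ext H true m → Reject Det Ext H true n →
      Reject Det Ext H true (.par false m n)
  | recur : ∀ {H : Set (List Act)} {b : Bool} {m : Mon Act},
      Reject Det Ext H b (m.substV 0 (.mrec m)) → Reject Det Ext H b (.mrec m)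

lemma reject_mono {Act : Type} {Det : Act → Bool} {Ext : Act → Prop}
    {H H' : Set (List Act)} {b : Bool} {m : Mon Act}
    (h : Reject Det Ext H b m) (hs : H ⊆ H') : Reject Det Ext H' b m := by
  induction h generalizing H' with
  | no hne =>
      refine .no fun he => hne ?_
      exact Set.subset_empty_iff.mp (he ▸ hs)
  | act _ ih => exact .act (ih fun x hx => hs hx)
  | actI hi _ ih => exact .actI hi (ih fun x hx => hs hx)
  | parAL _ ih => exact .parAL (ih hs)
  | parAR _ ih => exact .parAR (ih hs)
  | parO _ _ ih1 ih2 => exact .parO (ih1 hs) (ih2 hs)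
  | recur _ ih => exact .recur (ih hs)

lemma aft_insert_cons {Act : Type} (a : Act) (t : List Act)
    (H : Set (List Act)) : aft (insert (a :: t) H) a = insert t (aft H a) := by
  ext x; simp [aft, Set.mem_insert_iff, List.cons.injEq]

lemma aft_insert_of_ne {Act : Type} {a : Act} {t : List Act}
    (h : ∀ t', t ≠ a :: t') (H : Set (List Act)) :
    aft (insert t H) a = aft H a := by
  ext x
  simp only [aft, Set.mem_insert_iff, Set.mem_setOf_eq]
  constructor
  · rintro (heq | hx)
    · exact absurd heq.symm (h x)
    · exact hx
  · exact fun hx => Or.inr hx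

lemma aft_subset_aft_insert {Act : Type} (a : Act) (s : List Act)
    (H : Set (List Act)) : aft H a ⊆ aft (insert s H) a :=
  fun _ hx => Or.inr hx

lemma reject_length_aux {Act : Type} (Det : Act → Bool) (Ext : Act → Prop)
    (u : List Act) :
    ∀ {H : Set (List Act)} {b : Bool} {m : Mon Act},
      Reject Det Ext H b m → ∀ (H0 : Set (List Act)) (t : List Act),
        H = insert t H0 → Reject Det Ext (insert (t ++ u) H0) b m := by
  intro H b m h
  induction h with
  | no hne =>
      intro H0 t _
      exact .no (Set.insert_nonempty _ _).ne_empty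
  | @act H b a m hm ih =>
      intro H0 t hH
      subst hH
      match t with
      | a' :: t' =>
        by_cases hc : a' = a
        · subst hc
          have := ih (aft H0 a') t' (aft_insert_cons a' t' H0)
          rw [← aft_insert_cons a' (t' ++ u) H0] at this
          exact .act this
        · have he : ∀ t'', a' :: t' ≠ a :: t'' := by
            intro t'' hcontra; exact hc (List.cons.injEq .. ▸ hcontra).1
          have he2 : ∀ t'', a' :: t' ++ u ≠ a :: t'' := by
            intro t'' hcontra; exact hc (List.cons.injEq .. ▸ hcontra).1
          rw [aft_insert_of_ne he] at hm
          refine .act (reject_mono hm ?_)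
          rw [aft_insert_of_ne he2]
      | [] =>
        rw [aft_insert_of_ne (fun t' => (List.cons_ne_nil _ _).symm)] at hm
        exact .act (reject_mono hm (aft_subset_aft_insert _ _ _))
  | @actI H b a i m hi hm ih =>
      intro H0 t hH
      subst hH
      match t with
      | a' :: t' =>
        by_cases hc : a' = i
        · subst hc
          have := ih (aft H0 a') t' (aft_insert_cons a' t' H0)
          rw [← aft_insert_cons a' (t' ++ u) H0] at this
          exact .actI hi this
        · have he : ∀ t'', a' :: t' ≠ i :: t'' := by
            intro t'' hcontra; exact hc (List.cons.injEq .. ▸ hcontra).1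
          have he2 : ∀ t'', a' :: t' ++ u ≠ i :: t'' := by
            intro t'' hcontra; exact hc (List.cons.injEq .. ▸ hcontra).1
          rw [aft_insert_of_ne he] at hm
          refine .actI hi (reject_mono hm ?_)
          rw [aft_insert_of_ne he2]
      | [] =>
        rw [aft_insert_of_ne (fun t' => (List.cons_ne_nil _ _).symm)] at hm
        exact .actI hi (reject_mono hm (aft_subset_aft_insert _ _ _))
  | parAL _ ih => intro H0 t hH; exact .parAL (ih H0 t hH)
  | parAR _ ih => intro H0 t hH; exact .parAR (ih H0 t hH)
  | parO _ _ ih1 ih2 => intro H0 t hH; exact .parO (ih1 H0 t hH) (ih2 H0 t hH)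
  | recur _ ih => intro H0 t hH; exact .recur (ih H0 t hH)

/-- Length irrevocability of history rejection: if a monitor rejects a history
containing the trace `t`, it also rejects the history where `t` is extended by
any suffix `u`. -/
theorem reject_length_irrevocable {Act : Type} (Det : Act → Bool)
    (Ext : Act → Prop) (H : Set (List Act)) (t u : List Act) (b : Bool)
    (m : Mon Act) (h : Reject Det Ext (insert t H) b m) :
    Reject Det Ext (insert (t ++ u) H) b m := by
  exact reject_length_aux Det Ext u h H t rfl
end

section
/- Rejection implies violation for synthesized monitors: for all formulae φ in the monitorable fragment sHML∨, if reject(H, b, synth(φ)) then (H, b) ⊨viol φ, where ⊨viol is the history violation relation. -/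
/-- Formulae of the monitorable fragment sHML∨ (de Bruijn recursion
variables): truth, falsity, conjunction, disjunction, universal modality,
greatest fixed point, and recursion variables. -/
inductive SFrm (Act : Type) : Type
  | tt : SFrm Act
  | ff : SFrm Act
  | and : SFrm Act → SFrm Act → SFrm Act
  | or : SFrm Act → SFrm Act → SFrm Act
  | box : Act → SFrm Act → SFrm Act
  | max : SFrm Act → SFrm Act
  | var : Nat → SFrm Act

/-- Substitute formula `s` for variable `k` in a formula. -/
def SFrm.substV {Act : Type} : SFrm Act → Nat → SFrm Act → SFrm Act
  | .tt, _, _ => .tt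
  | .ff, _, _ => .ff
  | .and φ ψ, k, s => .and (φ.substV k s) (ψ.substV k s)
  | .or φ ψ, k, s => .or (φ.substV k s) (ψ.substV k s)
  | .box a φ, k, s => .box a (φ.substV k s)
  | .max φ, k, s => .max (φ.substV (k + 1) s)
  | .var n, k, s => if n = k then s else .var n

/-- The history violation relation `(H, b) ⊨viol φ`, relative to the
determinacy predicate `Det` and externality predicate `Ext` on actions. -/
inductive Viol {Act : Type} (Det : Act → Bool) (Ext : Act → Prop) :
    Set (List Act) → Bool → SFrm Act → Prop
  | ff : ∀ {H : Set (List Act)} {b : Bool}, H ≠ ∅ → Viol Det Ext H b .ff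
  | um : ∀ {H : Set (List Act)} {b : Bool} {a : Act} {φ : SFrm Act},
      Viol Det Ext (aft H a) (b && Det a) φ → Viol Det Ext H b (.box a φ)
  | umPre : ∀ {H : Set (List Act)} {b : Bool} {a i : Act} {φ : SFrm Act},
      ¬ Ext i → Viol Det Ext (aft H i) (b && Det i) (.box a φ) →
      Viol Det Ext H b (.box a φ)
  | andL : ∀ {H : Set (List Act)} {b : Bool} {φ ψ : SFrm Act},
      Viol Det Ext H b φ → Viol Det Ext H b (.and φ ψ)
  | andR : ∀ {H : Set (List Act)} {b : Bool} {φ ψ : SFrm Act},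
      Viol Det Ext H b ψ → Viol Det Ext H b (.and φ ψ)
  | or : ∀ {H : Set (List Act)} {φ ψ : SFrm Act},
      Viol Det Ext H true φ → Viol Det Ext H true ψ →
      Viol Det Ext H true (.or φ ψ)
  | max : ∀ {H : Set (List Act)} {b : Bool} {φ : SFrm Act},
      Viol Det Ext H b (φ.substV 0 (.max φ)) → Viol Det Ext H b (.max φ)

/-- The monitor synthesis function. -/
def synth {Act : Type} : SFrm Act → Mon Act
  | .ff => .no
  | .tt => .yes
  | .and φ ψ => .par true (synth φ) (synth ψ)
  | .or φ ψ => .par false (synth φ) (synth ψ)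
  | .box a φ => .act a (synth φ)
  | .max φ => .mrec (synth φ)
  | .var n => .var n

theorem synth_substV {Act : Type} (φ : SFrm Act) (k : Nat) (s : SFrm Act) :
    synth (φ.substV k s) = (synth φ).substV k (synth s) := by
  induction φ generalizing k with
  | tt => rfl
  | ff => rfl
  | and φ ψ ihφ ihψ => simp [SFrm.substV, synth, Mon.substV, ihφ, ihψ]
  | or φ ψ ihφ ihψ => simp [SFrm.substV, synth, Mon.substV, ihφ, ihψ]
  | box a φ ih => simp [SFrm.substV, synth, Mon.substV, ih]
  | max φ ih => simp [SFrm.substV, synth, Mon.substV, ih]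
  | var n =>
      simp only [SFrm.substV, synth]
      by_cases h : n = k <;> simp [h, synth, Mon.substV]

/-- Rejection implies violation for synthesized monitors: if the synthesized
monitor of `φ` rejects the history `H` with flag `b`, then `(H, b) ⊨viol φ`. -/
theorem reject_synth_implies_viol {Act : Type} (Det : Act → Bool)
    (Ext : Act → Prop) (φ : SFrm Act) (H : Set (List Act)) (b : Bool)
    (h : Reject Det Ext H b (synth φ)) :
    Viol Det Ext H b φ := by
  generalize hm : synth φ = m at h
  induction h generalizing φ with
  | no hne =>
      cases φ <;> simp [synth] at hm
      exact Viol.ff hne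
  | act hr ih =>
      cases φ <;> simp [synth] at hm
      case box a ψ =>
        obtain ⟨rfl, rfl⟩ := hm
        exact Viol.um (ih ψ rfl)
  | actI hi hr ih =>
      cases φ <;> simp [synth] at hm
      case box a ψ =>
        obtain ⟨rfl, rfl⟩ := hm
        exact Viol.umPre hi (ih (.box a ψ) rfl)
  | parAL hr ih =>
      cases φ <;> simp [synth] at hm
      case and ψ₁ ψ₂ =>
        obtain ⟨⟨rfl, rfl⟩, rfl, rfl⟩ := hm
        exact Viol.andL (ih ψ₁ rfl)
  | parAR hr ih =>
      cases φ <;> simp [synth] at hm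
      case and ψ₁ ψ₂ =>
        obtain ⟨⟨rfl, rfl⟩, rfl, rfl⟩ := hm
        exact Viol.andR (ih ψ₂ rfl)
  | parO hr1 hr2 ih1 ih2 =>
      cases φ <;> simp [synth] at hm
      case or ψ₁ ψ₂ =>
        obtain ⟨⟨rfl, rfl⟩, rfl, rfl⟩ := hm
        exact Viol.or (ih1 ψ₁ rfl) (ih2 ψ₂ rfl)
  | recur hr ih =>
      cases φ <;> simp [synth] at hm
      case max ψ =>
        subst hm
        exact Viol.max (ih (ψ.substV 0 (.max ψ)) (synth_substV ψ 0 (.max ψ)))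
end

section
/- Violating histories witness semantic violation: for every closed formula φ in sHML∨ and every system state p, if there exists a history H ⊆ T(p) with (H, b) ⊨viol φ, then p ∉ ⟦φ⟧ (p violates φ in the branching-time semantics). -/
/-- Unobservable moves of an ILTS: silent steps and internal-action steps. -/
def ILTS.unobs {Prc Act : Type} (S : ILTS Prc Act) (p q : Prc) : Prop :=
  S.step p none q ∨ ∃ i, S.step p (some i) q ∧ ¬ S.ext i

/-- Weak transition `p ⇒a q` for an external action `a`: abstracts over silent
and internal actions. -/
def ILTS.weakE {Prc Act : Type} (S : ILTS Prc Act) (p : Prc) (a : Act)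
    (q : Prc) : Prop :=
  ∃ p₁ p₂, Relation.ReflTransGen S.unobs p p₁ ∧ S.step p₁ (some a) p₂ ∧
    Relation.ReflTransGen S.unobs p₂ q

/-- Prepend a set to an environment. -/
def scons {Prc : Type} (P : Set Prc) (ρ : Nat → Set Prc) : Nat → Set Prc
  | 0 => P
  | n + 1 => ρ n

/-- Denotational branching-time semantics of sHML∨ formulae over an ILTS. -/
def ILTS.fsem {Prc Act : Type} (S : ILTS Prc Act) :
    SFrm Act → (Nat → Set Prc) → Set Prc
  | .tt, _ => Set.univ
  | .ff, _ => ∅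
  | .and φ ψ, ρ => S.fsem φ ρ ∩ S.fsem ψ ρ
  | .or φ ψ, ρ => S.fsem φ ρ ∪ S.fsem ψ ρ
  | .box a φ, ρ => { p | ∀ q, S.weakE p a q → q ∈ S.fsem φ ρ }
  | .max φ, ρ => ⋃₀ { P | P ⊆ S.fsem φ (scons P ρ) }
  | .var n, ρ => ρ n

/-- `φ` has all free variables below `k` (so `closedUnder φ 0` means closed). -/
def closedUnder {Act : Type} : SFrm Act → Nat → Prop
  | .tt, _ => True
  | .ff, _ => True
  | .and φ ψ, k => closedUnder φ k ∧ closedUnder ψ k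
  | .or φ ψ, k => closedUnder φ k ∧ closedUnder ψ k
  | .box _ φ, k => closedUnder φ k
  | .max φ, k => closedUnder φ (k + 1)
  | .var n, k => n < k


namespace ILTS

section Aux

variable {Prc Act : Type} (S : ILTS Prc Act)

/-- Weak transitions transport along the equivalence. -/
lemma wt_eqv_s14 : ∀ {p t r}, S.wt p t r → ∀ q, S.eqv p q → ∃ r', S.wt q t r' := by
  intro p t r h
  induction h with
  | refl p => exact fun q _ => ⟨q, .refl q⟩
  | tau hs _ ih =>
      intro q hq
      obtain ⟨q', hq', he⟩ := S.eqv_resp _ _ _ _ hq hs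
      obtain ⟨r', hr'⟩ := ih q' he
      exact ⟨r', .tau hq' hr'⟩
  | act hs _ ih =>
      intro q hq
      obtain ⟨q', hq', he⟩ := S.eqv_resp _ _ _ _ hq hs
      obtain ⟨r', hr'⟩ := ih q' he
      exact ⟨r', .act hq' hr'⟩

lemma traces_eqv {p q : Prc} (h : S.eqv p q) : S.traces p ⊆ S.traces q := by
  rintro t ⟨r, hw⟩
  obtain ⟨r', hr'⟩ := S.wt_eqv_s14 hw q h
  exact ⟨r', hr'⟩

lemma traces_eqv_eq {p q : Prc} (h : S.eqv p q) : S.traces p = S.traces q :=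
  Set.Subset.antisymm (S.traces_eqv h) (S.traces_eqv (S.eqv_equiv.symm h))

/-- Silent steps do not lose traces. -/
lemma wt_tau_s14 : ∀ {p t r}, S.wt p t r → ∀ q, S.step p none q → ∃ r', S.wt q t r' := by
  intro p t r h
  induction h with
  | refl p => exact fun q _ => ⟨q, .refl q⟩
  | tau hs hw ih =>
      intro q hq
      have he := S.tau_tau _ _ _ hs hq
      exact S.wt_eqv_s14 hw q he
  | act hs _ ih =>
      intro q hq
      obtain ⟨u, hu1, hu2⟩ := S.tau_conf _ _ _ _ hq hs
      obtain ⟨r', hr'⟩ := ih u hu2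
      exact ⟨r', .act hu1 hr'⟩

lemma traces_tau_eq {p q : Prc} (h : S.step p none q) : S.traces p = S.traces q := by
  apply Set.Subset.antisymm
  · rintro t ⟨r, hw⟩
    obtain ⟨r', hr'⟩ := S.wt_tau_s14 hw q h
    exact ⟨r', hr'⟩
  · rintro t ⟨r, hw⟩
    exact ⟨r, .tau h hw⟩

/-- Decomposition of a weak transition along a nonempty trace. -/
lemma wt_decomp : ∀ {p u r}, S.wt p u r → ∀ {a : Act} {t}, u = a :: t →
    ∃ p₁ p₂, Relation.ReflTransGen (fun x y => S.step x none y) p p₁ ∧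
      S.step p₁ (some a) p₂ ∧ S.wt p₂ t r := by
  intro p u r h
  induction h with
  | refl => intro a t ht; cases ht
  | tau hs _ ih =>
      intro a t ht
      obtain ⟨p₁, p₂, h1, h2, h3⟩ := ih ht
      exact ⟨p₁, p₂, .head hs h1, h2, h3⟩
  | act hs hw ih =>
      intro a t ht
      injection ht with h1 h2
      subst h1; subst h2
      exact ⟨_, _, .refl, hs, hw⟩

/-- Silent-step chains transport along the equivalence. -/
lemma rtg_eqv {p p' : Prc}
    (h : Relation.ReflTransGen (fun x y => S.step x none y) p p') :
    ∀ q, S.eqv p q →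
      ∃ q', Relation.ReflTransGen (fun x y => S.step x none y) q q' ∧ S.eqv p' q' := by
  induction h with
  | refl => exact fun q hq => ⟨q, .refl, hq⟩
  | tail _ hbc ih =>
      intro q hq
      obtain ⟨q', hq', he⟩ := ih q hq
      obtain ⟨q'', hq'', he'⟩ := S.eqv_resp _ _ _ _ he hbc
      exact ⟨q'', .tail hq' hq'', he'⟩

/-- For a deterministic action, an immediate result and any weak result have
equal trace sets. -/
lemma aresult_det {a : Act} (hdet : S.det a = true) :
    ∀ {p q₁}, Relation.ReflTransGen (fun x y => S.step x none y) p q₁ →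
    ∀ {q₂}, S.step q₁ (some a) q₂ → ∀ {u}, S.step p (some a) u →
      S.traces u = S.traces q₂ := by
  intro p q₁ hchain
  induction hchain using Relation.ReflTransGen.head_induction_on with
  | refl =>
      intro q₂ hq₂ u hu
      exact S.traces_eqv_eq (S.det_spec a hdet _ _ _ hu hq₂)
  | head h' _ ih =>
      intro q₂ hq₂ u hu
      obtain ⟨w, hw1, hw2⟩ := S.tau_conf _ _ _ _ h' hu
      rw [S.traces_tau_eq hw2]
      exact ih hq₂ hw1

/-- A weak `a`-capability propagates across a silent step, preserving traces. -/
lemma weakA_tau {a : Act} {p c q₁ q₂ : Prc} (hc : S.step p none c)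
    (hchain : Relation.ReflTransGen (fun x y => S.step x none y) p q₁)
    (hstep : S.step q₁ (some a) q₂) :
    ∃ r₁ r₂, Relation.ReflTransGen (fun x y => S.step x none y) c r₁ ∧
      S.step r₁ (some a) r₂ ∧ S.traces q₂ = S.traces r₂ := by
  rcases (Relation.ReflTransGen.cases_head hchain) with h | ⟨c', hc', hrest⟩
  · subst h
    obtain ⟨w, hw1, hw2⟩ := S.tau_conf _ _ _ _ hc hstep
    exact ⟨c, w, .refl, hw1, S.traces_tau_eq hw2⟩
  · have he : S.eqv c' c := S.tau_tau _ _ _ hc' hc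
    obtain ⟨q₁', hq₁', he'⟩ := S.rtg_eqv hrest c he
    obtain ⟨q₂', hq₂', he''⟩ := S.eqv_resp _ _ _ _ he' hstep
    exact ⟨q₁', q₂', hq₁', hq₂', S.traces_eqv_eq he''⟩

/-- For a deterministic action, any two weak results have equal trace sets. -/
lemma det_traces_eq {a : Act} (hdet : S.det a = true) :
    ∀ {p p₁}, Relation.ReflTransGen (fun x y => S.step x none y) p p₁ →
    ∀ {p₂}, S.step p₁ (some a) p₂ →
    ∀ {q₁ q₂}, Relation.ReflTransGen (fun x y => S.step x none y) p q₁ →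
      S.step q₁ (some a) q₂ → S.traces p₂ = S.traces q₂ := by
  intro p p₁ hchain
  induction hchain using Relation.ReflTransGen.head_induction_on with
  | refl =>
      intro p₂ hp₂ q₁ q₂ hq hq₂
      exact S.aresult_det hdet hq hq₂ hp₂
  | head h' _ ih =>
      intro p₂ hp₂ q₁ q₂ hq hq₂
      obtain ⟨r₁, r₂, hr₁, hr₂, htr⟩ := S.weakA_tau h' hq hq₂
      rw [htr]
      exact ih hp₂ hr₁ hr₂

lemma rtg_tau_unobs {p q : Prc}
    (h : Relation.ReflTransGen (fun x y => S.step x none y) p q) :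
    Relation.ReflTransGen S.unobs p q :=
  by
    induction h with
    | refl => exact .refl
    | tail _ hbc ih => exact ih.tail (Or.inl hbc)

/-- Box formulae are closed under unobservable moves. -/
lemma box_unobs {a : Act} {φ : SFrm Act} {ρ : Nat → Set Prc} {p p' : Prc}
    (hp : p ∈ S.fsem (.box a φ) ρ) (h : Relation.ReflTransGen S.unobs p p') :
    p' ∈ S.fsem (.box a φ) ρ := by
  intro q hq
  obtain ⟨p₁, p₂, h1, h2, h3⟩ := hq
  exact hp q ⟨p₁, p₂, h.trans h1, h2, h3⟩

end Aux

end ILTS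

section FrmAux

variable {Act : Type}

lemma closedUnder_mono : ∀ (φ : SFrm Act) {k k' : Nat}, k ≤ k' →
    closedUnder φ k → closedUnder φ k'
  | .tt, _, _, _, _ => trivial
  | .ff, _, _, _, _ => trivial
  | .and φ ψ, _, _, h, hc => ⟨closedUnder_mono φ h hc.1, closedUnder_mono ψ h hc.2⟩
  | .or φ ψ, _, _, h, hc => ⟨closedUnder_mono φ h hc.1, closedUnder_mono ψ h hc.2⟩
  | .box _ φ, _, _, h, hc => closedUnder_mono φ h hc
  | .max φ, _, _, h, hc => closedUnder_mono φ (Nat.succ_le_succ h) hc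
  | .var n, _, _, h, hc => Nat.lt_of_lt_of_le hc h

lemma closed_substV {s : SFrm Act} (hs : closedUnder s 0) :
    ∀ (φ : SFrm Act) (k : Nat), closedUnder φ (k + 1) →
      closedUnder (φ.substV k s) k
  | .tt, _, _ => trivial
  | .ff, _, _ => trivial
  | .and φ ψ, k, hc => ⟨closed_substV hs φ k hc.1, closed_substV hs ψ k hc.2⟩
  | .or φ ψ, k, hc => ⟨closed_substV hs φ k hc.1, closed_substV hs ψ k hc.2⟩
  | .box _ φ, k, hc => closed_substV hs φ k hc
  | .max φ, k, hc => closed_substV hs φ (k + 1) hc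
  | .var n, k, hc => by
      unfold SFrm.substV
      by_cases h : n = k
      · simpa [h] using closedUnder_mono s (Nat.zero_le k) hs
      · have : n < k := Nat.lt_of_le_of_ne (Nat.lt_succ_iff.mp hc) h
        simpa [h, closedUnder] using this

end FrmAux

namespace ILTS

section SemAux

variable {Prc Act : Type} (S : ILTS Prc Act)

lemma fsem_agree : ∀ (φ : SFrm Act) (k : Nat) (ρ ρ' : Nat → Set Prc),
    closedUnder φ k → (∀ n, n < k → ρ n = ρ' n) → S.fsem φ ρ = S.fsem φ ρ'
  | .tt, _, _, _, _, _ => rfl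
  | .ff, _, _, _, _, _ => rfl
  | .and φ ψ, k, ρ, ρ', hc, ha => by
      simp only [ILTS.fsem, fsem_agree φ k ρ ρ' hc.1 ha, fsem_agree ψ k ρ ρ' hc.2 ha]
  | .or φ ψ, k, ρ, ρ', hc, ha => by
      simp only [ILTS.fsem, fsem_agree φ k ρ ρ' hc.1 ha, fsem_agree ψ k ρ ρ' hc.2 ha]
  | .box a φ, k, ρ, ρ', hc, ha => by
      simp only [ILTS.fsem, fsem_agree φ k ρ ρ' hc ha]
  | .max φ, k, ρ, ρ', hc, ha => by
      have hfam : {P : Set Prc | P ⊆ S.fsem φ (scons P ρ)} =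
          {P : Set Prc | P ⊆ S.fsem φ (scons P ρ')} := by
        ext P
        have : S.fsem φ (scons P ρ) = S.fsem φ (scons P ρ') := by
          apply fsem_agree φ (k + 1) _ _ hc
          intro n hn
          cases n with
          | zero => rfl
          | succ m => exact ha m (Nat.lt_of_succ_lt_succ hn)
        simp [Set.mem_setOf_eq, this]
      simp only [ILTS.fsem, hfam]
  | .var n, k, ρ, ρ', hc, ha => ha n hc

lemma fsem_mono : ∀ (φ : SFrm Act) (ρ ρ' : Nat → Set Prc),
    (∀ n, ρ n ⊆ ρ' n) → S.fsem φ ρ ⊆ S.fsem φ ρ'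
  | .tt, _, _, _ => le_refl _
  | .ff, _, _, _ => le_refl _
  | .and φ ψ, ρ, ρ', h =>
      Set.inter_subset_inter (fsem_mono φ ρ ρ' h) (fsem_mono ψ ρ ρ' h)
  | .or φ ψ, ρ, ρ', h =>
      Set.union_subset_union (fsem_mono φ ρ ρ' h) (fsem_mono ψ ρ ρ' h)
  | .box a φ, ρ, ρ', h => fun p hp q hq => fsem_mono φ ρ ρ' h (hp q hq)
  | .max φ, ρ, ρ', h => by
      rintro p ⟨P, hP, hpP⟩
      refine ⟨P, ?_, hpP⟩
      intro x hx
      apply fsem_mono φ (scons P ρ) (scons P ρ') _ (hP hx)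
      intro n; cases n with
      | zero => exact le_refl _
      | succ m => exact h m
  | .var n, ρ, ρ', h => h n

lemma fsem_substV {s : SFrm Act} (hs : closedUnder s 0) :
    ∀ (φ : SFrm Act) (k : Nat) (ρ : Nat → Set Prc),
      S.fsem (φ.substV k s) ρ =
        S.fsem φ (fun n => if n = k then S.fsem s ρ else ρ n)
  | .tt, _, _ => rfl
  | .ff, _, _ => rfl
  | .and φ ψ, k, ρ => by
      simp only [SFrm.substV, ILTS.fsem, fsem_substV hs φ k ρ, fsem_substV hs ψ k ρ]
  | .or φ ψ, k, ρ => by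
      simp only [SFrm.substV, ILTS.fsem, fsem_substV hs φ k ρ, fsem_substV hs ψ k ρ]
  | .box a φ, k, ρ => by
      simp only [SFrm.substV, ILTS.fsem, fsem_substV hs φ k ρ]
  | .max φ, k, ρ => by
      have hfam : {P : Set Prc | P ⊆ S.fsem ((φ.substV (k+1) s)) (scons P ρ)} =
          {P : Set Prc | P ⊆ S.fsem φ
            (scons P (fun n => if n = k then S.fsem s ρ else ρ n))} := by
        ext P
        simp only [Set.mem_setOf_eq]
        rw [fsem_substV hs φ (k + 1) (scons P ρ)]
        have henv : (fun n => if n = k + 1 then S.fsem s (scons P ρ) else scons P ρ n) =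
            scons P (fun n => if n = k then S.fsem s ρ else ρ n) := by
          funext n
          cases n with
          | zero => simp [scons]
          | succ m =>
              simp only [scons, Nat.succ_eq_add_one, Nat.add_right_cancel_iff]
              rw [S.fsem_agree s 0 (scons P ρ) ρ hs (fun n hn => absurd hn (Nat.not_lt_zero n))]
        rw [henv]
      simp only [SFrm.substV, ILTS.fsem, hfam]
  | .var n, k, ρ => by
      simp only [SFrm.substV]
      by_cases h : n = k
      · simp [h, ILTS.fsem]
      · simp [h, ILTS.fsem]

/-- Unfolding of greatest fixed points. -/
lemma fsem_max_unfold {φ : SFrm Act} {ρ : Nat → Set Prc}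
    (hc : closedUnder (SFrm.max φ) 0) {p : Prc} (hp : p ∈ S.fsem (.max φ) ρ) :
    p ∈ S.fsem (φ.substV 0 (.max φ)) ρ := by
  obtain ⟨P, hP, hpP⟩ := hp
  have hPM : P ⊆ S.fsem (.max φ) ρ := fun x hx => ⟨P, hP, hx⟩
  have h1 : p ∈ S.fsem φ (scons (S.fsem (.max φ) ρ) ρ) := by
    apply S.fsem_mono φ (scons P ρ) _ _ (hP hpP)
    intro n; cases n with
    | zero => exact hPM
    | succ m => exact le_refl _
  rw [S.fsem_substV hc φ 0 ρ]
  have henv : S.fsem φ (scons (S.fsem (.max φ) ρ) ρ) =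
      S.fsem φ (fun n => if n = 0 then S.fsem (.max φ) ρ else ρ n) := by
    apply S.fsem_agree φ 1 _ _ hc
    intro n hn
    interval_cases n
    rfl
  rw [← henv]
  exact h1

end SemAux

end ILTS

section ViolAux

variable {Act : Type} {Det : Act → Bool} {Ext : Act → Prop}

lemma aft_singleton (a : Act) (t : List Act) : aft {a :: t} a = {t} := by
  ext x
  simp [aft, List.cons.injEq]

lemma Viol.nonempty : ∀ {H : Set (List Act)} {b : Bool} {φ : SFrm Act},
    Viol Det Ext H b φ → H.Nonempty := by
  intro H b φ h
  induction h with
  | ff hne => exact Set.nonempty_iff_ne_empty.mpr hne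
  | um _ ih => obtain ⟨t, ht⟩ := ih; exact ⟨_, ht⟩
  | umPre _ _ ih => obtain ⟨t, ht⟩ := ih; exact ⟨_, ht⟩
  | andL _ ih => exact ih
  | andR _ ih => exact ih
  | or _ _ ih _ => exact ih
  | max _ ih => exact ih

/-- A violation with flag `false` is witnessed by a single trace. -/
lemma Viol.single : ∀ {H : Set (List Act)} {b : Bool} {φ : SFrm Act},
    Viol Det Ext H b φ → b = false → ∃ t ∈ H, Viol Det Ext {t} false φ := by
  intro H b φ h
  induction h with
  | ff hne =>
      intro _
      obtain ⟨t, ht⟩ := Set.nonempty_iff_ne_empty.mpr hne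
      exact ⟨t, ht, .ff (Set.singleton_ne_empty t)⟩
  | um _ ih =>
      intro hb; subst hb
      obtain ⟨t, ht, hv⟩ := ih (by simp)
      exact ⟨_, ht, .um (by rw [aft_singleton, Bool.false_and]; exact hv)⟩
  | umPre hext _ ih =>
      intro hb; subst hb
      obtain ⟨t, ht, hv⟩ := ih (by simp)
      exact ⟨_, ht, .umPre hext (by rw [aft_singleton, Bool.false_and]; exact hv)⟩
  | andL _ ih =>
      intro hb
      obtain ⟨t, ht, hv⟩ := ih hb
      exact ⟨t, ht, .andL hv⟩
  | andR _ ih =>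
      intro hb
      obtain ⟨t, ht, hv⟩ := ih hb
      exact ⟨t, ht, .andR hv⟩
  | or _ _ _ _ => intro hb; cases hb
  | max _ ih =>
      intro hb
      obtain ⟨t, ht, hv⟩ := ih hb
      exact ⟨t, ht, .max hv⟩

end ViolAux

namespace ILTS

section Main

variable {Prc Act : Type} (S : ILTS Prc Act)

/-- A single violating trace of `p` witnesses semantic violation. -/
lemma viol_single_sound : ∀ {H : Set (List Act)} {b : Bool} {φ : SFrm Act},
    Viol S.det S.ext H b φ → ∀ t : List Act, H = {t} → closedUnder φ 0 →
      ∀ (p : Prc) (ρ : Nat → Set Prc), t ∈ S.traces p → p ∉ S.fsem φ ρ := by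
  intro H b φ h
  induction h with
  | ff _ => intro t _ _ p ρ _ hp; exact hp
  | @um H b a φ hv ih =>
      intro t hH hc p ρ ht hp
      subst hH
      obtain ⟨t', ht'⟩ := hv.nonempty
      have : a :: t' = t := ht'
      subst this
      obtain ⟨r, hw⟩ := ht
      obtain ⟨p₁, p₂, h1, h2, h3⟩ := S.wt_decomp hw rfl
      have hweak : S.weakE p a p₂ := ⟨p₁, p₂, S.rtg_tau_unobs h1, h2, .refl⟩
      exact ih t' (aft_singleton a t') hc p₂ ρ ⟨r, h3⟩ (hp p₂ hweak)
  | @umPre H b a i φ hext hv ih =>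
      intro t hH hc p ρ ht hp
      subst hH
      obtain ⟨t', ht'⟩ := hv.nonempty
      have : i :: t' = t := ht'
      subst this
      obtain ⟨r, hw⟩ := ht
      obtain ⟨p₁, p₂, h1, h2, h3⟩ := S.wt_decomp hw rfl
      have hchain : Relation.ReflTransGen S.unobs p p₂ :=
        (S.rtg_tau_unobs h1).tail (Or.inr ⟨i, h2, hext⟩)
      exact ih t' (aft_singleton i t') hc p₂ ρ ⟨r, h3⟩ (S.box_unobs hp hchain)
  | andL _ ih =>
      intro t hH hc p ρ ht hp
      exact ih t hH hc.1 p ρ ht hp.1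
  | andR _ ih =>
      intro t hH hc p ρ ht hp
      exact ih t hH hc.2 p ρ ht hp.2
  | or _ _ ih₁ ih₂ =>
      intro t hH hc p ρ ht hp
      cases hp with
      | inl h' => exact ih₁ t hH hc.1 p ρ ht h'
      | inr h' => exact ih₂ t hH hc.2 p ρ ht h'
  | @max H b φ hv ih =>
      intro t hH hc p ρ ht hp
      exact ih t hH (closed_substV hc φ 0 hc) p ρ ht (S.fsem_max_unfold hc hp)

/-- A violation with a true flag witnesses semantic violation. -/
lemma viol_true_sound : ∀ {H : Set (List Act)} {b : Bool} {φ : SFrm Act},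
    Viol S.det S.ext H b φ → b = true → closedUnder φ 0 →
      ∀ (p : Prc) (ρ : Nat → Set Prc), H ⊆ S.traces p → p ∉ S.fsem φ ρ := by
  intro H b φ h
  induction h with
  | ff _ => intro _ _ p ρ _ hp; exact hp
  | @um H b a φ hv ih =>
      intro hb hc p ρ hsub hp
      subst hb
      obtain ⟨t₀, ht₀⟩ := hv.nonempty
      obtain ⟨r₀, hw₀⟩ := hsub (show a :: t₀ ∈ H from ht₀)
      obtain ⟨p₁, p₂, h1, h2, h3⟩ := S.wt_decomp hw₀ rfl
      have hweak : S.weakE p a p₂ := ⟨p₁, p₂, S.rtg_tau_unobs h1, h2, .refl⟩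
      by_cases hd : S.det a = true
      · have hflag : (true && S.det a) = true := by simp [hd]
        apply ih hflag hc p₂ ρ _ (hp p₂ hweak)
        intro t htaft
        obtain ⟨r, hw⟩ := hsub (show a :: t ∈ H from htaft)
        obtain ⟨q₁, q₂, g1, g2, g3⟩ := S.wt_decomp hw rfl
        have := S.det_traces_eq hd g1 g2 h1 h2
        rw [← this]
        exact ⟨r, g3⟩
      · have hflag : (true && S.det a) = false := by
          simp [Bool.not_eq_true] at hd; simp [hd]
        have hv' : Viol S.det S.ext (aft H a) false φ := hflag ▸ hv
        obtain ⟨t, ht, hone⟩ := hv'.single rfl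
        obtain ⟨r, hw⟩ := hsub (show a :: t ∈ H from ht)
        obtain ⟨q₁, q₂, g1, g2, g3⟩ := S.wt_decomp hw rfl
        have hweak' : S.weakE p a q₂ := ⟨q₁, q₂, S.rtg_tau_unobs g1, g2, .refl⟩
        exact S.viol_single_sound hone t rfl hc q₂ ρ ⟨r, g3⟩ (hp q₂ hweak')
  | @umPre H b a i φ hext hv ih =>
      intro hb hc p ρ hsub hp
      subst hb
      obtain ⟨t₀, ht₀⟩ := hv.nonempty
      obtain ⟨r₀, hw₀⟩ := hsub (show i :: t₀ ∈ H from ht₀)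
      obtain ⟨p₁, p₂, h1, h2, h3⟩ := S.wt_decomp hw₀ rfl
      have hchain : Relation.ReflTransGen S.unobs p p₂ :=
        (S.rtg_tau_unobs h1).tail (Or.inr ⟨i, h2, hext⟩)
      by_cases hd : S.det i = true
      · have hflag : (true && S.det i) = true := by simp [hd]
        apply ih hflag hc p₂ ρ _ (S.box_unobs hp hchain)
        intro t htaft
        obtain ⟨r, hw⟩ := hsub (show i :: t ∈ H from htaft)
        obtain ⟨q₁, q₂, g1, g2, g3⟩ := S.wt_decomp hw rfl
        have := S.det_traces_eq hd g1 g2 h1 h2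
        rw [← this]
        exact ⟨r, g3⟩
      · have hflag : (true && S.det i) = false := by
          simp [Bool.not_eq_true] at hd; simp [hd]
        have hv' : Viol S.det S.ext (aft H i) false (.box a φ) := hflag ▸ hv
        obtain ⟨t, ht, hone⟩ := hv'.single rfl
        obtain ⟨r, hw⟩ := hsub (show i :: t ∈ H from ht)
        obtain ⟨q₁, q₂, g1, g2, g3⟩ := S.wt_decomp hw rfl
        have hchain' : Relation.ReflTransGen S.unobs p q₂ :=
          (S.rtg_tau_unobs g1).tail (Or.inr ⟨i, g2, hext⟩)
        exact S.viol_single_sound hone t rfl hc q₂ ρ ⟨r, g3⟩ (S.box_unobs hp hchain')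
  | andL _ ih =>
      intro hb hc p ρ hsub hp
      exact ih hb hc.1 p ρ hsub hp.1
  | andR _ ih =>
      intro hb hc p ρ hsub hp
      exact ih hb hc.2 p ρ hsub hp.2
  | or _ _ ih₁ ih₂ =>
      intro hb hc p ρ hsub hp
      cases hp with
      | inl h' => exact ih₁ rfl hc.1 p ρ hsub h'
      | inr h' => exact ih₂ rfl hc.2 p ρ hsub h'
  | @max H b φ hv ih =>
      intro hb hc p ρ hsub hp
      exact ih hb (closed_substV hc φ 0 hc) p ρ hsub (S.fsem_max_unfold hc hp)

end Main

end ILTS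

/-- Violating histories witness semantic violation: if some history produced by
`p` violates the closed formula `φ`, then `p` violates `φ` in the
branching-time semantics. -/
theorem viol_implies_not_sat {Prc Act : Type} (S : ILTS Prc Act)
    (φ : SFrm Act) (hclosed : closedUnder φ 0) (p : Prc) (b : Bool)
    (h : ∃ H : Set (List Act), H ⊆ S.traces p ∧ Viol S.det S.ext H b φ) :
    ∀ ρ : Nat → Set Prc, p ∉ S.fsem φ ρ := by
  intro ρ hp
  obtain ⟨H, hsub, hv⟩ := h
  cases b with
  | false =>
      obtain ⟨t, ht, hone⟩ := hv.single rfl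
      exact S.viol_single_sound hone t rfl hclosed p ρ (hsub ht) hp
  | true => exact S.viol_true_sound hv rfl hclosed p ρ hsub hp
end

section
/- Lower-bound function: substitution monotonicity. For the lower-bound function lb on sHML∨ formulae in normal form: (1) lb(φ[ψ/X]) = lb(φ[max Y.ψ / X]); (2) if lb(ψ) ≤ lb(χ) then lb(φ[ψ/X]) ≤ lb(φ[χ/X]); (3) if lb(φ) ≤ lb(ψ) then lb(φ) ≤ lb(ψ[φ/X]). In particular lb(φ) ≤ lb(φ[φ/X]). -/
/-- The actions of the top-level boxes of a disjunction of modal formulae. -/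
def topActs {Act : Type} : SFrm Act → Set Act
  | .box a _ => {a}
  | .or φ ψ => topActs φ ∪ topActs ψ
  | _ => ∅

/-- `φ` is (shaped as) a disjunction of box formulae `⋁ᵢ [aᵢ]φᵢ`. -/
def IsBoxDisj {Act : Type} : SFrm Act → Prop
  | .box _ _ => True
  | .or φ ψ => IsBoxDisj φ ∧ IsBoxDisj ψ
  | _ => False

/-- Normal-form formulae (sHML_nf): disjunctions only combine box formulae and
the actions of the top-level boxes in a disjunction are pairwise distinct. -/
inductive NF {Act : Type} : SFrm Act → Prop
  | tt : NF .tt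
  | ff : NF .ff
  | var : ∀ n, NF (.var n)
  | and : ∀ {φ ψ : SFrm Act}, NF φ → NF ψ → NF (.and φ ψ)
  | max : ∀ {φ : SFrm Act}, NF φ → NF (.max φ)
  | box : ∀ {φ : SFrm Act} (a : Act), NF φ → NF (.box a φ)
  | or : ∀ {φ ψ : SFrm Act}, NF φ → NF ψ → IsBoxDisj φ → IsBoxDisj ψ →
      Disjoint (topActs φ) (topActs ψ) → NF (.or φ ψ)

/-- The history lower-bound function `lb : sHML∨ → ℕ∞`. -/
noncomputable def lb {Act : Type} : SFrm Act → ℕ∞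
  | .ff => 0
  | .tt => ⊤
  | .var _ => ⊤
  | .box _ φ => lb φ
  | .max φ => lb φ
  | .and φ ψ => min (lb φ) (lb ψ)
  | .or φ ψ => lb φ + lb ψ + 1

lemma lb_subst_congr {Act : Type} {s s' : SFrm Act} (h : lb s = lb s') :
    ∀ (φ : SFrm Act) (k : Nat), lb (φ.substV k s) = lb (φ.substV k s') := by
  intro φ
  induction φ with
  | var n => intro k; simp only [SFrm.substV]; split_ifs <;> simp [h]
  | _ => intro k <;> simp_all [SFrm.substV, lb]

lemma lb_subst_mono {Act : Type} {s s' : SFrm Act} (h : lb s ≤ lb s') :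
    ∀ (φ : SFrm Act) (k : Nat), lb (φ.substV k s) ≤ lb (φ.substV k s') := by
  intro φ
  induction φ with
  | var n => intro k; simp only [SFrm.substV]; split_ifs <;> simp [h]
  | and φ ψ ihφ ihψ =>
      intro k; exact min_le_min (ihφ k) (ihψ k)
  | or φ ψ ihφ ihψ =>
      intro k; exact add_le_add (add_le_add (ihφ k) (ihψ k)) le_rfl
  | _ => intro k <;> simp_all [SFrm.substV, lb]

lemma lb_min_le_subst {Act : Type} (s : SFrm Act) :
    ∀ (φ : SFrm Act) (k : Nat), min (lb s) (lb φ) ≤ lb (φ.substV k s) := by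
  intro φ
  induction φ with
  | var n => intro k; simp only [SFrm.substV]; split_ifs <;> simp [lb]
  | and φ ψ ihφ ihψ =>
      intro k
      refine le_min (le_trans ?_ (ihφ k)) (le_trans ?_ (ihψ k)) <;>
        exact min_le_min le_rfl (by simp [lb])
  | or φ ψ ihφ ihψ =>
      intro k
      have h1 := ihφ k
      have h2 := ihψ k
      simp only [lb]
      rcases le_total (lb s) (lb φ) with hφ | hφ
      · rcases le_total (lb s) (lb ψ) with hψ | hψ
        · calc min (lb s) (lb φ + lb ψ + 1) ≤ lb s := min_le_left _ _
            _ ≤ min (lb s) (lb φ) := le_min le_rfl hφ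
            _ ≤ lb (φ.substV k s) := h1
            _ ≤ lb (φ.substV k s) + lb (ψ.substV k s) + 1 := by
                exact le_add_right (le_add_right le_rfl)
        · calc min (lb s) (lb φ + lb ψ + 1) ≤ lb s := min_le_left _ _
            _ ≤ min (lb s) (lb φ) := le_min le_rfl hφ
            _ ≤ _ := le_trans h1 (le_add_right (le_add_right le_rfl))
      · rcases le_total (lb s) (lb ψ) with hψ | hψ
        · calc min (lb s) (lb φ + lb ψ + 1) ≤ lb s := min_le_left _ _
            _ ≤ min (lb s) (lb ψ) := le_min le_rfl hψ
            _ ≤ lb (ψ.substV k s) := h2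
            _ ≤ _ := by exact le_add_right (le_add_left le_rfl)
        · have e1 : min (lb s) (lb φ) = lb φ := min_eq_right hφ
          have e2 : min (lb s) (lb ψ) = lb ψ := min_eq_right hψ
          calc min (lb s) (lb φ + lb ψ + 1) ≤ lb φ + lb ψ + 1 := min_le_right _ _
            _ ≤ lb (φ.substV k s) + lb (ψ.substV k s) + 1 := by
                exact add_le_add (add_le_add (e1 ▸ h1) (e2 ▸ h2)) le_rfl
  | _ => intro k <;> simp_all [SFrm.substV, lb]

/-- Substitution monotonicity properties of the lower-bound function on
normal-form formulae: (1) `lb (φ[ψ/X]) = lb (φ[max Y.ψ/X])`; (2) `lb` of a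
substitution is monotone in the substituted formula; (3) if `lb φ ≤ lb ψ` then
`lb φ ≤ lb (ψ[φ/X])`; in particular `lb φ ≤ lb (φ[φ/X])`. -/
theorem lb_subst_props {Act : Type} (φ ψ χ : SFrm Act) (k : Nat)
    (hφ : NF φ) (hψ : NF ψ) (hχ : NF χ) :
    (lb (φ.substV k ψ) = lb (φ.substV k (SFrm.max ψ))) ∧
    (lb ψ ≤ lb χ → lb (φ.substV k ψ) ≤ lb (φ.substV k χ)) ∧
    (lb φ ≤ lb ψ → lb φ ≤ lb (ψ.substV k φ)) ∧
    lb φ ≤ lb (φ.substV k φ) := by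
  refine ⟨lb_subst_congr (by simp [lb]) φ k, fun h => lb_subst_mono h φ k, fun h => ?_, ?_⟩
  · calc lb φ = min (lb φ) (lb ψ) := (min_eq_left h).symm
      _ ≤ lb (ψ.substV k φ) := lb_min_le_subst φ ψ k
  · calc lb φ = min (lb φ) (lb φ) := (min_self _).symm
      _ ≤ lb (φ.substV k φ) := lb_min_le_subst φ φ k
end
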